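/- Let f : E → [0,∞] be upper radial with 0 < sup f < ∞. Then (argmin f^Γ) × {inf f^Γ} ⊆ Γ((argmax f) × {sup f}), where argmax f = {x ∈ E : f(x) = sup f} and argmin f^Γ = {y ∈ E : f^Γ(y) = inf f^Γ}. If moreover for every y ∈ E the map v ↦ f^p(y,v) is strictly increasing on {v > 0 : 0 < f^p(y,v) < ∞}, then equality holds. -/

import Mathlib

open Set
open scoped ENNReal RealInnerProductSpace

noncomputable section

variable {E : Type*} [NormedAddCommGroup E] [InnerProductSpace ℝ E] [FiniteDimensional ℝ E]

/-- The radial point transformation `Γ(x,u) = (x/u, 1/u)`. -/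
def radialPoint (p : E × ℝ) : E × ℝ := (p.2⁻¹ • p.1, p.2⁻¹)

/-- The radial set transformation `ΓS = {Γ(x,u) : (x,u) ∈ S}`. -/
def radialSet (S : Set (E × ℝ)) : Set (E × ℝ) := radialPoint '' S

/-- The perspective function `f^p(y,v) = v·f(y/v)` (for `v > 0`). -/
def persp (f : E → ℝ≥0∞) (y : E) (v : ℝ) : ℝ≥0∞ := ENNReal.ofReal v * f (v⁻¹ • y)

/-- The upper radial transformation `f^Γ(y) = sup{v > 0 : v·f(y/v) ≤ 1}` (`sup ∅ = 0`). -/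
def radSup (f : E → ℝ≥0∞) (y : E) : ℝ≥0∞ :=
  ⨆ (v : ℝ) (_ : 0 < v) (_ : persp f y v ≤ 1), ENNReal.ofReal v

/-- `f` is upper radial: every `f^p(y,·)` is nondecreasing and upper semicontinuous on `ℝ₊₊`. -/
def UpperRadial (f : E → ℝ≥0∞) : Prop :=
  ∀ y : E, MonotoneOn (persp f y) (Ioi (0 : ℝ)) ∧
    UpperSemicontinuousOn (persp f y) (Ioi (0 : ℝ))

/-- Every `f^p(y,·)` is strictly increasing on its domain `{v > 0 : 0 < f^p(y,v) < ∞}`. -/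
def StrictPersp (f : E → ℝ≥0∞) : Prop :=
  ∀ y : E, StrictMonoOn (persp f y)
    {v : ℝ | 0 < v ∧ 0 < persp f y v ∧ persp f y v ≠ ⊤}

/-- For upper radial `f` with `0 < sup f < ∞`,
`(argmin f^Γ) × {inf f^Γ} ⊆ Γ((argmax f) × {sup f})`, with equality when every
`f^p(y,·)` is strictly increasing on its domain. -/
theorem radial_minimizers (f : E → ℝ≥0∞) (hrad : UpperRadial f)
    (hsup0 : (⨆ x : E, f x) ≠ 0) (hsupT : (⨆ x : E, f x) ≠ ⊤) :
    ({p : E × ℝ | radSup f p.1 = ⨅ y : E, radSup f y ∧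
        p.2 = (⨅ y : E, radSup f y).toReal} ⊆
      radialSet {p : E × ℝ | f p.1 = ⨆ x : E, f x ∧ p.2 = (⨆ x : E, f x).toReal}) ∧
    (StrictPersp f →
      {p : E × ℝ | radSup f p.1 = ⨅ y : E, radSup f y ∧
          p.2 = (⨅ y : E, radSup f y).toReal} =
        radialSet {p : E × ℝ | f p.1 = ⨆ x : E, f x ∧ p.2 = (⨆ x : E, f x).toReal}) := by
  set M : ℝ≥0∞ := ⨆ x : E, f x with hM
  have hM0 : M ≠ 0 := hsup0
  have hMT : M ≠ ⊤ := hsupT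
  have hMinv0 : M⁻¹ ≠ 0 := ENNReal.inv_ne_zero.mpr hMT
  have hMinvT : M⁻¹ ≠ ⊤ := ENNReal.inv_ne_top.mpr hM0
  set r : ℝ := M⁻¹.toReal with hr
  have hrpos : 0 < r := ENNReal.toReal_pos hMinv0 hMinvT
  have hofr : ENNReal.ofReal r = M⁻¹ := ENNReal.ofReal_toReal hMinvT
  -- (A) : persp f y r ≤ 1 for all y
  have hA : ∀ y : E, persp f y r ≤ 1 := by
    intro y
    have hle : f (r⁻¹ • y) ≤ M := le_iSup f _
    calc persp f y r = ENNReal.ofReal r * f (r⁻¹ • y) := rfl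
      _ ≤ M⁻¹ * M := by rw [hofr]; exact mul_le_mul_right hle _
      _ = 1 := ENNReal.inv_mul_cancel hM0 hMT
  -- (B) : M⁻¹ ≤ radSup f y for all y
  have hB : ∀ y : E, M⁻¹ ≤ radSup f y := by
    intro y
    rw [← hofr]
    exact le_iSup_of_le r <| le_iSup_of_le hrpos <| le_iSup_of_le (hA y) le_rfl
  -- (C) : the infimum of radSup equals M⁻¹
  have hC : (⨅ y : E, radSup f y) = M⁻¹ := by
    refine le_antisymm ?_ (le_iInf hB)
    have key : ∀ (x : E) (s : ℝ), 0 < s → 1 < ENNReal.ofReal s * f x →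
        (⨅ y : E, radSup f y) ≤ ENNReal.ofReal s := by
      intro x s hs hlt
      refine le_trans (iInf_le _ (s • x)) ?_
      refine iSup_le fun v => iSup_le fun hv => iSup_le fun hle => ?_
      refine ENNReal.ofReal_le_ofReal ?_
      by_contra hvs
      push_neg at hvs
      have hps : persp f (s • x) s = ENNReal.ofReal s * f x := by
        unfold persp
        rw [smul_smul, inv_mul_cancel₀ (ne_of_gt hs), one_smul]
      have hmono := (hrad (s • x)).1 (mem_Ioi.mpr hs) (mem_Ioi.mpr hv) hvs.le
      rw [hps] at hmono
      exact absurd (le_trans hmono hle) (not_le.mpr hlt)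
    refine le_of_forall_gt_imp_ge_of_dense fun c hc => ?_
    -- hc : M⁻¹ < c ; find x with (f x)⁻¹ < c
    have hcM : c⁻¹ < M := ENNReal.inv_lt_iff_inv_lt.mp hc
    rw [hM, lt_iSup_iff] at hcM
    obtain ⟨x, hx⟩ := hcM
    have hfx0 : f x ≠ 0 := by
      intro h0; rw [h0] at hx; exact (not_lt.mpr zero_le) hx
    have hfxT : f x ≠ ⊤ := by
      intro hT
      exact hMT (top_le_iff.mp (hT ▸ le_iSup f x))
    have hfxinvc : (f x)⁻¹ < c := ENNReal.inv_lt_iff_inv_lt.mp hx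
    set d : ℝ≥0∞ := min c ((f x)⁻¹ + 1) with hd
    have hiT : (f x)⁻¹ ≠ ⊤ := ENNReal.inv_ne_top.mpr hfx0
    have hdinv : (f x)⁻¹ < d :=
      lt_min hfxinvc (ENNReal.lt_add_right hiT one_ne_zero)
    have hdT : d ≠ ⊤ := by
      refine ne_top_of_le_ne_top ?_ (min_le_right _ _)
      exact ENNReal.add_ne_top.mpr ⟨hiT, ENNReal.one_ne_top⟩
    have hd0 : d ≠ 0 := by
      intro h0
      rw [h0] at hdinv
      exact (not_lt.mpr zero_le) hdinv
    have hspos : 0 < d.toReal := ENNReal.toReal_pos hd0 hdT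
    have hofd : ENNReal.ofReal d.toReal = d := ENNReal.ofReal_toReal hdT
    have h1lt : 1 < ENNReal.ofReal d.toReal * f x := by
      rw [hofd]
      calc (1 : ℝ≥0∞) = (f x)⁻¹ * f x := (ENNReal.inv_mul_cancel hfx0 hfxT).symm
        _ < d * f x := ENNReal.mul_lt_mul_left hfx0 hfxT hdinv
    calc (⨅ y : E, radSup f y) ≤ ENNReal.ofReal d.toReal := key x _ hspos h1lt
      _ = d := hofd
      _ ≤ c := min_le_left _ _
  -- at a minimizer, persp f y r = 1
  have hincl : ∀ y : E, radSup f y = M⁻¹ → persp f y r = 1 := by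
    intro y hy
    refine le_antisymm (hA y) ?_
    by_contra hlt
    push_neg at hlt
    have husc := (hrad y).2 r (mem_Ioi.mpr hrpos) 1 hlt
    have h2 : ∀ᶠ v in nhdsWithin r (Ioi r), persp f y v < 1 :=
      husc.filter_mono (nhdsWithin_mono r (Ioi_subset_Ioi hrpos.le))
    obtain ⟨v, hv1, hvr⟩ := (h2.and eventually_mem_nhdsWithin).exists
    have hvpos : 0 < v := lt_trans hrpos hvr
    have hge : ENNReal.ofReal v ≤ radSup f y :=
      le_iSup_of_le v <| le_iSup_of_le hvpos <| le_iSup_of_le hv1.le le_rfl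
    rw [hy, ← hofr] at hge
    exact absurd hge (not_le.mpr ((ENNReal.ofReal_lt_ofReal_iff_of_nonneg hrpos.le).mpr hvr))
  -- forward inclusion
  have part1 : ({p : E × ℝ | radSup f p.1 = ⨅ y : E, radSup f y ∧
        p.2 = (⨅ y : E, radSup f y).toReal} ⊆
      radialSet {p : E × ℝ | f p.1 = ⨆ x : E, f x ∧ p.2 = (⨆ x : E, f x).toReal}) := by
    rintro ⟨y, t⟩ ⟨h1, h2⟩
    simp only [hC] at h1 h2
    have hper := hincl y h1
    have hfx : f (r⁻¹ • y) = M := by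
      have h3 : M⁻¹ * f (r⁻¹ • y) = 1 := by rw [← hofr]; exact hper
      calc f (r⁻¹ • y) = M * (M⁻¹ * f (r⁻¹ • y)) := by
            rw [← mul_assoc, ENNReal.mul_inv_cancel hM0 hMT, one_mul]
        _ = M := by rw [h3, mul_one]
    have hMr : M.toReal = r⁻¹ := by rw [hr, ENNReal.toReal_inv, inv_inv]
    refine ⟨(r⁻¹ • y, M.toReal), ⟨hfx, rfl⟩, ?_⟩
    simp only [radialPoint, hMr, inv_inv]
    have hyy : r • r⁻¹ • y = y := by
      rw [smul_smul, mul_inv_cancel₀ (ne_of_gt hrpos), one_smul]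
    rw [hyy, h2]
  refine ⟨part1, fun hstrict => Subset.antisymm part1 ?_⟩
  rintro ⟨y, t⟩ ⟨⟨x, u⟩, ⟨hfx, hu⟩, heq⟩
  simp only at hfx hu
  subst hu
  have hur : (M.toReal)⁻¹ = r := by rw [hr, ENNReal.toReal_inv]
  simp only [radialPoint, hur, Prod.mk.injEq] at heq
  obtain ⟨hy, ht⟩ := heq
  subst hy; subst ht
  have hgr : persp f (r • x) r = 1 := by
    unfold persp
    rw [smul_smul, inv_mul_cancel₀ (ne_of_gt hrpos), one_smul, hofr, hfx,
      ENNReal.inv_mul_cancel hM0 hMT]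
  have hrs : radSup f (r • x) = M⁻¹ := by
    refine le_antisymm ?_ (hB _)
    refine iSup_le fun v => iSup_le fun hv => iSup_le fun hle => ?_
    rw [← hofr]
    refine ENNReal.ofReal_le_ofReal ?_
    by_contra hvr
    push_neg at hvr
    have hmono := (hrad (r • x)).1 (mem_Ioi.mpr hrpos) (mem_Ioi.mpr hv) hvr.le
    rw [hgr] at hmono
    have hgv : persp f (r • x) v = 1 := le_antisymm hle hmono
    have := hstrict (r • x)
      ⟨hrpos, by rw [hgr]; exact ⟨one_pos, ENNReal.one_ne_top⟩⟩
      ⟨hv, by rw [hgv]; exact ⟨one_pos, ENNReal.one_ne_top⟩⟩ hvr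
    rw [hgr, hgv] at this
    exact lt_irrefl 1 this
  constructor
  · simp only [hC]; exact hrs
  · simp only [hC]; exact hr
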